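/- Let f : ℝⁿ → ℝᵐ be differentiable, let X ⊆ ℝⁿ, and fix x' ∈ X. Let ℳ ⊆ ℝᵐˣⁿ be a set of matrices such that the mixed Jacobian matrix M_{x'}f(x, s) belongs to ℳ for every x ∈ X and every s ∈ [0,1]ⁿ. Then for every x ∈ X, the vector f(x) − f(x') belongs to the set {M(x − x') : M ∈ closure(convexHull(ℳ))}. -/

import Mathlib

open Filter Topology Set Matrix Pointwise

/-- The mixed Jacobian matrix `M_{x'}f(x,s)`, whose `(i,j)` entry is
`∂f_i/∂x_j(x₁, …, x_{j-1}, s_j x_j + (1-s_j) x'_j, x'_{j+1}, …, x'_n)`. -/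
noncomputable def mixedJac {n m : ℕ} (f : (Fin n → ℝ) → (Fin m → ℝ)) (x' x s : Fin n → ℝ) :
    Matrix (Fin m) (Fin n) ℝ :=
  fun i j =>
    fderiv ℝ f
      (fun k => if k < j then x k else if k = j then s j * x j + (1 - s j) * x' j else x' k)
      (Pi.single j 1) i

/-- 1-D vector-valued mean value theorem, closed convex hull version. -/
lemma mvt_hull {m : ℕ} (g : ℝ → Fin m → ℝ) (hg : Differentiable ℝ g) :
    g 1 - g 0 ∈ closure (convexHull ℝ (deriv g '' Icc (0:ℝ) 1)) := by
  by_contra h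
  obtain ⟨L, u, hLs, hLx⟩ := geometric_hahn_banach_closed_point
    ((convex_convexHull ℝ _).closure) isClosed_closure h
  have hderiv : ∀ t ∈ Ioo (0:ℝ) 1, HasDerivAt (fun t => L (g t)) (L (deriv g t)) t := by
    intro t _
    exact L.hasFDerivAt.comp_hasDerivAt t (hg t).hasDerivAt
  obtain ⟨c, hc, hceq⟩ := exists_hasDerivAt_eq_slope (fun t => L (g t))
    (fun t => L (deriv g t)) one_pos
    ((L.continuous.comp hg.continuous).continuousOn) hderiv
  have hmem : deriv g c ∈ closure (convexHull ℝ (deriv g '' Icc (0:ℝ) 1)) :=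
    subset_closure (subset_convexHull ℝ _ ⟨c, Ioo_subset_Icc_self hc, rfl⟩)
  have h1 : L (deriv g c) < u := hLs _ hmem
  have h2 : u < L (g 1) - L (g 0) := by simpa [map_sub] using hLx
  rw [hceq] at h1
  simp at h1
  linarith

theorem stmt3 {n m : ℕ} (f : (Fin n → ℝ) → (Fin m → ℝ)) (hf : Differentiable ℝ f)
    (X : Set (Fin n → ℝ)) (x' : Fin n → ℝ) (hx' : x' ∈ X)
    (ℳ : Set (Matrix (Fin m) (Fin n) ℝ))
    (hℳ : ∀ x ∈ X, ∀ s : Fin n → ℝ, (∀ j, s j ∈ Icc (0:ℝ) 1) → mixedJac f x' x s ∈ ℳ)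
    (x : Fin n → ℝ) (hx : x ∈ X) :
    f x - f x' ∈
      (fun M : Matrix (Fin m) (Fin n) ℝ => M.mulVec (x - x')) '' closure (convexHull ℝ ℳ) := by
  classical
  set d : Fin n → ℝ := fun j => x j - x' j with hd
  set q : Fin n → ℝ → (Fin n → ℝ) := fun j t k =>
    if k < j then x k else if k = j then t * x j + (1 - t) * x' j else x' k with hqdef
  set C : Fin n → ℝ → (Fin m → ℝ) := fun j t => fderiv ℝ f (q j t) (Pi.single j 1) with hCdef
  set g : Fin n → ℝ → (Fin m → ℝ) := fun j t => f (q j t) with hgdef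
  -- the line description of q
  have hqline : ∀ (j : Fin n) (t : ℝ),
      q j t = (fun k => if k < j then x k else x' k) + (t * d j) • (Pi.single j 1 : Fin n → ℝ) := by
    intro j t
    funext k
    simp only [hqdef, Pi.add_apply, Pi.smul_apply, Pi.single_apply, smul_eq_mul, hd]
    rcases lt_trichotomy k j with hk | hk | hk
    · simp [hk, hk.ne]
    · simp [hk]; ring
    · simp [hk.ne', not_lt.mpr hk.le, lt_asymm hk]
  -- derivative of g j
  have hgd : ∀ (j : Fin n) (t : ℝ), HasDerivAt (g j) (d j • C j t) t := by
    intro j t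
    have h1 : HasDerivAt (fun t : ℝ => q j t)
        ((1 * d j) • (Pi.single j 1 : Fin n → ℝ)) t := by
      have := ((hasDerivAt_id t).mul_const (d j)).smul_const
        (Pi.single j (1:ℝ) : Fin n → ℝ)
      have h2 := this.const_add (fun k => if k < j then x k else x' k)
      simpa only [id_eq, ← hqline] using h2
    rw [one_mul] at h1
    have h3 := ((hf (q j t)).hasFDerivAt).comp_hasDerivAt t h1
    have h4 : (fderiv ℝ f (q j t)) (d j • (Pi.single j 1 : Fin n → ℝ)) = d j • C j t :=
      (fderiv ℝ f (q j t)).map_smul _ _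
    simpa only [hgdef, Function.comp_def, h4] using h3
  have hgdiff : ∀ j : Fin n, Differentiable ℝ (g j) := fun j t => (hgd j t).differentiableAt
  have hgderiv : ∀ (j : Fin n) (t : ℝ), deriv (g j) t = d j • C j t := fun j t => (hgd j t).deriv
  -- telescoping
  set P : ℕ → (Fin n → ℝ) := fun a k => if (k : ℕ) < a then x k else x' k with hPdef
  have hq0 : ∀ j : Fin n, q j 0 = P j := by
    intro j; funext k
    simp only [hqdef, hPdef, Fin.lt_def]
    rcases lt_trichotomy (k : ℕ) (j : ℕ) with hk | hk | hk
    · simp [hk]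
    · have : k = j := Fin.ext hk
      simp [this]
    · simp [Nat.lt_asymm hk, (Fin.ext_iff.not.mpr hk.ne')]
  have hq1 : ∀ j : Fin n, q j 1 = P (j + 1) := by
    intro j; funext k
    simp only [hqdef, hPdef, Fin.lt_def]
    rcases lt_trichotomy (k : ℕ) (j : ℕ) with hk | hk | hk
    · simp [hk, hk.trans (Nat.lt_succ_self _)]
    · have : k = j := Fin.ext hk
      simp [this]
    · simp [Nat.lt_asymm hk, (Fin.ext_iff.not.mpr hk.ne'), Nat.not_lt.mpr hk]
  have htel : (∑ j : Fin n, (g j 1 - g j 0)) = f x - f x' := by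
    have h1 : (∑ j : Fin n, (g j 1 - g j 0))
        = ∑ a ∈ Finset.range n, (f (P (a + 1)) - f (P a)) := by
      rw [← Fin.sum_univ_eq_sum_range (fun a => f (P (a + 1)) - f (P a)) n]
      refine Finset.sum_congr rfl fun j _ => ?_
      rw [hgdef]
      simp only [hq0 j, hq1 j]
    rw [h1, Finset.sum_range_sub (fun a => f (P a)) n]
    have hPn : P n = x := by funext k; simp [hPdef, k.isLt]
    have hP0 : P 0 = x' := by funext k; simp [hPdef]
    rw [hPn, hP0]
  -- column sets
  set A : Fin n → Set (Fin m → ℝ) := fun j => C j '' Icc (0:ℝ) 1 with hAdef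
  -- column membership
  have hcol : ∀ j : Fin n, ∃ u ∈ closure (convexHull ℝ (A j)),
      d j • u = g j 1 - g j 0 := by
    intro j
    have hkey := mvt_hull (g j) (hgdiff j)
    have himg : deriv (g j) '' Icc (0:ℝ) 1 = d j • A j := by
      rw [hAdef, ← Set.image_smul, ← Set.image_comp]
      exact Set.image_congr fun t _ => hgderiv j t
    rw [himg] at hkey
    by_cases hdj : d j = 0
    · refine ⟨C j 0, subset_closure (subset_convexHull ℝ _ ⟨0, by norm_num, rfl⟩), ?_⟩
      rw [hdj, zero_smul]
      have hxj : x j = x' j := by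
        have : x j - x' j = 0 := hdj
        linarith
      have : q j 1 = q j 0 := by
        funext k
        simp only [hqdef]
        rcases eq_or_ne k j with hk | hk
        · simp [hk, hxj]
        · simp [hk]
      rw [hgdef]
      simp [this]
    · rw [convexHull_smul, closure_smul₀ (d j)] at hkey
      obtain ⟨u, hu, huv⟩ := hkey
      exact ⟨u, hu, huv⟩
  choose u hu hdu using hcol
  -- assemble the matrix
  let Φ : (Fin n → Fin m → ℝ) →ₗ[ℝ] Matrix (Fin m) (Fin n) ℝ :=
    { toFun := fun v => Matrix.of fun i j => v j i
      map_add' := fun _ _ => rfl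
      map_smul' := fun _ _ => rfl }
  have hΦcont : Continuous Φ := Φ.continuous_of_finiteDimensional
  have hupi : u ∈ closure (convexHull ℝ (Set.pi univ A)) := by
    rw [convexHull_pi, closure_pi_set]
    intro j _
    exact hu j
  have hsub : Φ '' (Set.pi univ A) ⊆ ℳ := by
    rintro _ ⟨v, hv, rfl⟩
    choose t ht hCt using fun j => hv j (mem_univ j)
    have hveq : Φ v = mixedJac f x' x t := by
      funext i j
      show v j i = mixedJac f x' x t i j
      rw [← hCt j]
      rfl
    rw [hveq]
    exact hℳ x hx t ht
  have hM : Φ u ∈ closure (convexHull ℝ ℳ) := by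
    have h1 : Φ u ∈ Φ '' closure (convexHull ℝ (Set.pi univ A)) := ⟨u, hupi, rfl⟩
    have h2 : Φ '' closure (convexHull ℝ (Set.pi univ A))
        ⊆ closure (Φ '' convexHull ℝ (Set.pi univ A)) :=
      image_closure_subset_closure_image hΦcont
    rw [Φ.image_convexHull] at h2
    have h3 : closure (convexHull ℝ (Φ '' Set.pi univ A))
        ⊆ closure (convexHull ℝ ℳ) :=
      closure_mono (convexHull_mono hsub)
    exact h3 (h2 h1)
  refine ⟨Φ u, hM, ?_⟩
  funext i
  show ∑ j, u j i * (x - x') j = (f x - f x') i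
  have : ∀ j : Fin n, u j i * (x - x') j = (g j 1 - g j 0) i := by
    intro j
    rw [← hdu j]
    simp [hd, mul_comm]
  rw [Finset.sum_congr rfl fun j _ => this j]
  rw [← htel]
  simp [Finset.sum_apply]
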